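/- For every positive integer n and every function σ: E(K_{4n}) → {-1,1} with |σ(E(K_{4n}))| < n² + 11n + 2, there is a perfect matching M in K_{4n} with |σ(M)| ≤ 2. -/

import Mathlib

open Finset

noncomputable def sumE {m : ℕ} (σ : Sym2 (Fin m) → ℤ) (S : Set (Sym2 (Fin m))) : ℤ :=
  ∑ e ∈ S.toFinite.toFinset, σ e

def Kc (m : ℕ) : SimpleGraph (Fin m) := ⊤


namespace SPM

variable {q : ℕ}

def pos (i : Fin q) (b : Bool) : Fin (2*q) :=
  ⟨2*i.val + b.toNat, by have := i.2; cases b <;> simp [Bool.toNat] <;> omega⟩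

lemma pos_inj {i j : Fin q} {b c : Bool} (h : pos i b = pos j c) : i = j ∧ b = c := by
  have hv : 2*i.val + b.toNat = 2*j.val + c.toNat := congrArg Fin.val h
  cases b <;> cases c <;> simp [Bool.toNat] at hv ⊢ <;> [skip; omega; omega; skip] <;>
    exact Fin.ext (by omega)

lemma pos_cover (x : Fin (2*q)) : ∃ i b, x = pos i b := by
  have hx := x.2
  refine ⟨⟨x.val/2, by omega⟩, decide (x.val % 2 = 1), ?_⟩
  apply Fin.ext
  by_cases h : x.val % 2 = 1 <;> simp [pos, h, Bool.toNat] <;> omega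

def ed (f : Equiv.Perm (Fin (2*q))) (i : Fin q) : Sym2 (Fin (2*q)) :=
  s(f (pos i false), f (pos i true))

def S (σ : Sym2 (Fin (2*q)) → ℤ) (f : Equiv.Perm (Fin (2*q))) : ℤ :=
  ∑ i, σ (ed f i)

lemma ed_not_diag (f : Equiv.Perm (Fin (2*q))) (i : Fin q) : ¬ (ed f i).IsDiag := by
  simp only [ed, Sym2.isDiag_iff_proj_eq]
  intro h
  have := f.injective h
  exact absurd (pos_inj this).2 (by simp)

/-- IVT-style lemma for integer sequences with steps ≤ 4. -/
lemma ivt (a : ℕ → ℤ) : ∀ (m : ℕ), (∀ j, j < m → |a (j+1) - a j| ≤ 4) →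
    a 0 ≤ 2 → -2 ≤ a m → ∃ j, j ≤ m ∧ |a j| ≤ 2 := by
  intro m
  induction m with
  | zero => intro _ h0 hm; exact ⟨0, le_refl _, abs_le.2 ⟨hm, h0⟩⟩
  | succ m ih =>
    intro hstep h0 hm
    by_cases hlast : -2 ≤ a m
    · obtain ⟨j, hj, hja⟩ := ih (fun j hj => hstep j (by omega)) h0 hlast
      exact ⟨j, by omega, hja⟩
    · push_neg at hlast
      refine ⟨m+1, le_refl _, abs_le.2 ⟨hm, ?_⟩⟩
      have := hstep m (by omega)
      have := abs_le.1 this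
      omega

end SPM


namespace SPM2
variable {V : Type*} [DecidableEq V]

def flat {t : ℕ} (h : Fin t → V × V) : Fin t × Bool → V :=
  fun p => if p.2 then (h p.1).2 else (h p.1).1

def isM (A : V → V → Prop) (t : ℕ) (h : Fin t → V × V) : Prop :=
  (∀ i, A (h i).1 (h i).2) ∧ Function.Injective (flat h)

lemma repl {A : V → V → Prop} {t} {h : Fin t → V × V} (hm : isM A t h) (i : Fin t)
    (p : V × V) (hadj : A p.1 p.2) (hne : p.1 ≠ p.2)
    (h1 : p.1 = (h i).1 ∨ p.1 = (h i).2 ∨ ∀ z, p.1 ≠ flat h z)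
    (h2 : p.2 = (h i).1 ∨ p.2 = (h i).2 ∨ ∀ z, p.2 ≠ flat h z) :
    isM A t (Function.update h i p) := by
  obtain ⟨hadj0, hinj⟩ := hm
  constructor
  · intro j
    by_cases hj : j = i
    · subst hj; simp [hadj]
    · simp [Function.update_of_ne hj, hadj0 j]
  · intro ⟨k, b⟩ ⟨k', b'⟩ heq
    simp only [flat] at heq
    have key : ∀ (c : V) (j : Fin t) (β : Bool), j ≠ i →
        (c = (h i).1 ∨ c = (h i).2 ∨ ∀ z, c ≠ flat h z) → c ≠ flat h (j, β) := by
      intro c j β hji hc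
      rcases hc with hc | hc | hc
      · subst hc; intro hcon
        have := hinj (a₁ := (i, false)) (a₂ := (j, β)) (by simpa [flat] using hcon)
        exact hji (by simpa using congrArg Prod.fst this.symm)
      · subst hc; intro hcon
        have := hinj (a₁ := (i, true)) (a₂ := (j, β)) (by simpa [flat] using hcon)
        exact hji (by simpa using congrArg Prod.fst this.symm)
      · exact hc (j, β)
    by_cases hk : k = i <;> by_cases hk' : k' = i
    · subst hk; subst hk'
      simp only [Function.update_self] at heq
      cases b <;> cases b' <;> simp_all
    · subst hk
      simp only [Function.update_self, Function.update_of_ne hk'] at heq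
      exfalso
      cases b <;> [exact key p.1 k' b' hk' h1 heq; exact key p.2 k' b' hk' h2 heq]
    · subst hk'
      simp only [Function.update_self, Function.update_of_ne hk] at heq
      exfalso
      cases b' <;> [exact key p.1 k b hk h1 heq.symm; exact key p.2 k b hk h2 heq.symm]
    · simp only [Function.update_of_ne hk, Function.update_of_ne hk'] at heq
      have : flat h (k, b) = flat h (k', b') := by cases b <;> cases b' <;> simpa [flat] using heq
      exact hinj this

lemma app {A : V → V → Prop} {t} {h : Fin t → V × V} (hm : isM A t h)
    (p : V × V) (hadj : A p.1 p.2) (hne : p.1 ≠ p.2)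
    (h1 : ∀ z, p.1 ≠ flat h z) (h2 : ∀ z, p.2 ≠ flat h z) :
    isM A (t+1) (Fin.snoc h p) := by
  obtain ⟨hadj0, hinj⟩ := hm
  constructor
  · intro j
    refine Fin.lastCases ?_ ?_ j
    · simp [hadj]
    · intro j; simp [hadj0 j]
  · intro ⟨k, b⟩ ⟨k', b'⟩ heq
    simp only [flat] at heq
    rcases Fin.eq_castSucc_or_eq_last k with ⟨k0, rfl⟩ | rfl <;>
      rcases Fin.eq_castSucc_or_eq_last k' with ⟨k0', rfl⟩ | rfl
    · simp only [Fin.snoc_castSucc] at heq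
      have : flat h (k0, b) = flat h (k0', b') := by
        cases b <;> cases b' <;> simpa [flat] using heq
      have := hinj this
      simp only [Prod.mk.injEq] at this
      simp [this.1, this.2]
    · exfalso
      simp only [Fin.snoc_castSucc, Fin.snoc_last] at heq
      cases b' <;> [exact h1 (k0, b) (by cases b <;> simpa [flat] using heq.symm);
        exact h2 (k0, b) (by cases b <;> simpa [flat] using heq.symm)]
    · exfalso
      simp only [Fin.snoc_castSucc, Fin.snoc_last] at heq
      cases b <;> [exact h1 (k0', b') (by cases b' <;> simpa [flat] using heq);
        exact h2 (k0', b') (by cases b' <;> simpa [flat] using heq)]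
    · simp only [Fin.snoc_last] at heq
      cases b <;> cases b' <;> simp_all

lemma flat_update {t} (h : Fin t → V × V) (i : Fin t) (p : V × V) (k : Fin t) (b : Bool) :
    flat (Function.update h i p) (k, b) =
      if k = i then (if b then p.2 else p.1) else flat h (k, b) := by
  by_cases hk : k = i
  · subst hk; simp [flat]
  · simp [flat, Function.update_of_ne hk, hk]

end SPM2

open SPM2

variable {V : Type*} [Fintype V] [DecidableEq V]

lemma sym2_eq {a b : V} {e : Sym2 V} (hab : a ≠ b) (ha : a ∈ e) (hb : b ∈ e) : e = s(a,b) :=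
  ((Sym2.mem_and_mem_iff hab).1 ⟨ha, hb⟩)

omit [Fintype V] in
lemma card_mem_filter [Fintype V] {e : Sym2 V} (hnd : ¬ e.IsDiag) :
    (univ.filter (fun v => v ∈ e)).card = 2 := by
  induction e with
  | _ a b =>
    have hab : a ≠ b := by simpa using hnd
    have : (univ.filter (fun v => v ∈ s(a,b))) = {a, b} := by
      ext v; simp [Sym2.mem_iff]
    rw [this, card_insert_of_notMem (by simpa using hab), card_singleton]

omit [Fintype V] in
lemma card_le_other (F : Finset (Sym2 V)) (v : V) (T : Finset V)
    (hv : ∀ e ∈ F, v ∈ e) (hnd : ∀ e ∈ F, ¬ e.IsDiag)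
    (hT : ∀ e ∈ F, ∀ u, u ∈ e → u ≠ v → u ∈ T) : F.card ≤ T.card := by
  classical
  have : ∀ e ∈ F, ∃ u, u ∈ T ∧ e = s(v, u) := by
    intro e he
    induction e with
    | _ a b =>
      have hv' := hv _ he
      have hnd' : a ≠ b := by simpa using hnd _ he
      rcases Sym2.mem_iff.1 hv' with rfl | rfl
      · exact ⟨b, hT _ he b (by simp) (Ne.symm hnd'), rfl⟩
      · exact ⟨a, hT _ he a (by simp) hnd', by rw [Sym2.eq_swap]⟩
  choose u hu using this
  apply Finset.card_le_card_of_injOn (fun e => if he : e ∈ F then u e he else v)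
  · intro e he; simp only [mem_coe] at he; simp only [dif_pos he]; exact (hu e he).1
  · intro e he e' he' heq
    simp only [mem_coe] at he he'
    simp only [dif_pos he, dif_pos he'] at heq
    rw [(hu e he).2, (hu e' he').2, heq]

set_option maxHeartbeats 1000000 in
theorem lemL (Ed : Finset (Sym2 V))
    (hnd : ∀ e ∈ Ed, ¬ e.IsDiag) (t : ℕ) (h : Fin t → V × V)
    (hm : isM (fun u v => u ≠ v ∧ s(u,v) ∈ Ed) t h)
    (hmax : ¬ ∃ h' : Fin (t+1) → V × V, isM (fun u v => u ≠ v ∧ s(u,v) ∈ Ed) (t+1) h')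
    (hN : 4*t + 1 ≤ Fintype.card V) :
    2 * Ed.card + t*t + t ≤ 2*t*(Fintype.card V) := by
  classical
  set A : V → V → Prop := fun u v => u ≠ v ∧ s(u,v) ∈ Ed with hA
  set S : Finset V := image (flat h) univ with hS
  have hmemS : ∀ x, x ∈ S ↔ ∃ z, flat h z = x := by
    intro x; simp [hS]
  have hflatS : ∀ z, flat h z ∈ S := fun z => (hmemS _).2 ⟨z, rfl⟩
  have hScard : S.card = 2*t := by
    rw [hS, card_image_of_injective _ hm.2]
    simp only [card_univ, Fintype.card_prod, Fintype.card_fin, Fintype.card_bool]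
    omega
  have hin1 : ∀ i, (h i).1 ∈ S := fun i => hflatS (i, false)
  have hin2 : ∀ i, (h i).2 ∈ S := fun i => hflatS (i, true)
  set W : Finset V := Sᶜ with hWdef
  have hW : W.card + 2*t = Fintype.card V := by
    rw [hWdef, card_compl, hScard]
    have h2t : 2*t ≤ Fintype.card V := by omega
    omega
  -- every edge touches S
  have htouch : ∀ e ∈ Ed, ∃ v, v ∈ e ∧ v ∈ S := by
    intro e he
    by_contra hcon
    push_neg at hcon
    induction e with
    | _ a b =>
      have hab : a ≠ b := by simpa using hnd _ he
      refine hmax ⟨_, app hm (a, b) ⟨hab, he⟩ hab ?_ ?_⟩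
      · intro z hz; exact absurd ((hmemS a).2 ⟨z, hz.symm⟩) (by simpa using hcon a (by simp))
      · intro z hz; exact absurd ((hmemS b).2 ⟨z, hz.symm⟩) (by simpa using hcon b (by simp))
  set Ein : Finset (Sym2 V) := Ed.filter (fun e => ∀ v ∈ e, v ∈ S) with hEinDef
  set Ecr : Finset (Sym2 V) := Ed.filter (fun e => ¬ ∀ v ∈ e, v ∈ S) with hEcrDef
  have hsplit : Ein.card + Ecr.card = Ed.card := card_filter_add_card_filter_not _
  set dW : V → ℕ := fun v => (Ecr.filter (fun e => v ∈ e)).card with hdWdef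
  set din : V → ℕ := fun v => (Ein.filter (fun e => v ∈ e)).card with hdindef
  have hndcr : ∀ e ∈ Ecr, ¬ e.IsDiag := fun e he => hnd e (filter_subset _ _ he)
  have hndin : ∀ e ∈ Ein, ¬ e.IsDiag := fun e he => hnd e (filter_subset _ _ he)
  -- other endpoint of a cross edge at an S-vertex is outside S
  have hEcr_other : ∀ e ∈ Ecr, ∀ v, v ∈ e → v ∈ S → ∀ u, u ∈ e → u ≠ v → u ∉ S := by
    intro e he v hv hvS u hu huv huS
    rw [hEcrDef, mem_filter] at he
    obtain ⟨heEd, hnall⟩ := he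
    apply hnall
    intro w hw
    have : e = s(v, u) := sym2_eq (Ne.symm huv) hv hu
    rw [this, Sym2.mem_iff] at hw
    rcases hw with rfl | rfl
    exacts [hvS, huS]
  -- Ecr counted by S-degrees
  have hEcr_card : Ecr.card = ∑ v ∈ S, dW v := by
    have hpart : Ecr = S.biUnion (fun v => Ecr.filter (fun e => v ∈ e)) := by
      ext e
      simp only [mem_biUnion, mem_filter]
      constructor
      · intro he
        obtain ⟨v, hv, hvS⟩ := htouch e (filter_subset _ _ he)
        exact ⟨v, hvS, he, hv⟩
      · rintro ⟨v, _, he, _⟩; exact he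
    rw [hpart, card_biUnion]
    intro x hx y hy hxy
    simp only [Function.onFun]
    rw [Finset.disjoint_left]
    intro e he he'
    rw [mem_filter] at he he'
    have : e = s(x, y) := sym2_eq hxy he.2 he'.2
    rw [hEcrDef, mem_filter] at he
    apply he.1.2
    intro w hw
    rw [this, Sym2.mem_iff] at hw
    rcases hw with rfl | rfl
    exacts [hx, hy]
  -- neighbor extraction
  have getW1 : ∀ v ∈ S, 1 ≤ dW v → ∃ w, w ∉ S ∧ v ≠ w ∧ s(v,w) ∈ Ed := by
    intro v hvS h1
    obtain ⟨e, he⟩ := card_pos.1 (show 0 < (Ecr.filter (fun e => v ∈ e)).card by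
      have := h1; simp only [hdWdef] at this; omega)
    rw [mem_filter] at he
    obtain ⟨hecr, hve⟩ := he
    have hd := hndcr _ hecr
    set w := Sym2.Mem.other hve with hw
    have hsp : s(v, w) = e := Sym2.other_spec hve
    have hwv : w ≠ v := Sym2.other_ne hd hve
    refine ⟨w, ?_, Ne.symm hwv, by rw [hsp]; exact (mem_filter.1 hecr).1⟩
    exact hEcr_other e hecr v hve hvS w (Sym2.other_mem hve) hwv
  have getW2 : ∀ v ∈ S, 2 ≤ dW v → ∀ w0 : V, ∃ w, w ∉ S ∧ w ≠ w0 ∧ v ≠ w ∧ s(v,w) ∈ Ed := by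
    intro v hvS h2 w0
    by_contra hcon
    push_neg at hcon
    have hsub : Ecr.filter (fun e => v ∈ e) ⊆ {s(v, w0)} := by
      intro e he
      rw [mem_filter] at he
      obtain ⟨hecr, hve⟩ := he
      have hd := hndcr _ hecr
      set w := Sym2.Mem.other hve with hw
      have hsp : s(v, w) = e := Sym2.other_spec hve
      have hwv : w ≠ v := Sym2.other_ne hd hve
      have hwS : w ∉ S := hEcr_other e hecr v hve hvS w (Sym2.other_mem hve) hwv
      have hEd : s(v, w) ∈ Ed := by rw [hsp]; exact (mem_filter.1 hecr).1
      have : w = w0 := by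
        by_contra hww0
        exact (hcon w hwS hww0 (Ne.symm hwv)) hEd
      rw [mem_singleton, ← hsp, this]
    have hle := card_le_card hsub
    rw [card_singleton] at hle
    simp only [hdWdef] at h2
    omega
  -- beta fact
  have haug2 : ∀ (i : Fin t) (x y : V),
      ((x = (h i).1 ∧ y = (h i).2) ∨ (x = (h i).2 ∧ y = (h i).1)) →
      2 ≤ dW x → 1 ≤ dW y → False := by
    intro i x y hxy h2 h1
    have hxS : x ∈ S := by rcases hxy with ⟨rfl, _⟩ | ⟨rfl, _⟩; exacts [hin1 i, hin2 i]
    have hyS : y ∈ S := by rcases hxy with ⟨_, rfl⟩ | ⟨_, rfl⟩; exacts [hin2 i, hin1 i]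
    obtain ⟨w'', hw''S, hyw, hyEd⟩ := getW1 y hyS h1
    obtain ⟨w, hwS, hww'', hxw, hxEd⟩ := getW2 x hxS h2 w''
    have hxyne : x ≠ y := by
      rcases hxy with ⟨rfl, rfl⟩ | ⟨rfl, rfl⟩
      · intro hc
        exact absurd (congrArg Prod.snd (hm.2 (a₁ := (i, false)) (a₂ := (i, true))
          (by simpa [flat] using hc))) (by simp)
      · intro hc
        exact absurd (congrArg Prod.snd (hm.2 (a₁ := (i, true)) (a₂ := (i, false))
          (by simpa [flat] using hc))) (by simp)
    have hstep1 : isM A t (Function.update h i (x, w)) := by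
      apply repl hm i (x, w) ⟨hxw, hxEd⟩ hxw
      · rcases hxy with ⟨rfl, _⟩ | ⟨rfl, _⟩
        exacts [Or.inl rfl, Or.inr (Or.inl rfl)]
      · exact Or.inr (Or.inr (fun z hz => hwS (by rw [show w = flat h z from hz]; exact hflatS z)))
    apply hmax
    refine ⟨_, app hstep1 (y, w'') ⟨hyw, hyEd⟩ hyw ?_ ?_⟩
    · rintro ⟨k, b⟩ hz
      simp only [flat_update] at hz
      by_cases hk : k = i
      · rw [if_pos hk] at hz
        cases b
        · simp only [Bool.false_eq_true, if_false] at hz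
          exact hxyne hz.symm
        · simp only [if_true] at hz
          exact hwS (by rw [← hz]; exact hyS)
      · rw [if_neg hk] at hz
        have hyflat : ∃ b', y = flat h (i, b') := by
          rcases hxy with ⟨_, rfl⟩ | ⟨_, rfl⟩
          exacts [⟨true, rfl⟩, ⟨false, rfl⟩]
        obtain ⟨b', hb'⟩ := hyflat
        have := hm.2 (a₁ := (i, b')) (a₂ := (k, b)) (by rw [← hb']; exact hz)
        exact hk (by simpa using congrArg Prod.fst this.symm)
    · rintro ⟨k, b⟩ hz
      simp only [flat_update] at hz
      by_cases hk : k = i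
      · rw [if_pos hk] at hz
        cases b
        · simp only [Bool.false_eq_true, if_false] at hz
          exact hw''S (by rw [hz]; exact hxS)
        · simp only [if_true] at hz
          exact hww'' hz.symm
      · rw [if_neg hk] at hz
        exact hw''S (by rw [hz]; exact hflatS (k, b))
  -- rich indices
  set rich : Fin t → Prop := fun i => 2 ≤ dW (h i).1 ∨ 2 ≤ dW (h i).2 with hrichdef
  set R : Finset (Fin t) := univ.filter rich with hRdef
  set ufn : Fin t → V := fun i => if 2 ≤ dW (h i).1 then (h i).1 else (h i).2 with hufndef
  set vfn : Fin t → V := fun i => if 2 ≤ dW (h i).1 then (h i).2 else (h i).1 with hvfndef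
  have hufnS : ∀ i, ufn i ∈ S := by
    intro i; simp only [hufndef]; split; exacts [hin1 i, hin2 i]
  have hvfnS : ∀ i, vfn i ∈ S := by
    intro i; simp only [hvfndef]; split; exacts [hin2 i, hin1 i]
  have huvfn : ∀ i, (ufn i = (h i).1 ∧ vfn i = (h i).2) ∨ (ufn i = (h i).2 ∧ vfn i = (h i).1) := by
    intro i; by_cases hc : 2 ≤ dW (h i).1
    · left; constructor <;> simp [hufndef, hvfndef, hc]
    · right; constructor <;> simp [hufndef, hvfndef, hc]
  have hrichu : ∀ i ∈ R, 2 ≤ dW (ufn i) := by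
    intro i hi
    rw [hRdef, mem_filter] at hi
    by_cases hc : 2 ≤ dW (h i).1
    · simpa [hufndef, hc] using hc
    · rcases hi.2 with hd | hd
      · exact absurd hd hc
      · simpa [hufndef, hc] using hd
  have hvfn_dW : ∀ i ∈ R, dW (vfn i) = 0 := by
    intro i hi
    by_contra hne
    exact haug2 i (ufn i) (vfn i) (huvfn i) (hrichu i hi) (Nat.one_le_iff_ne_zero.2 hne)
  have hvfn_flat : ∀ i, ∃ b, vfn i = flat h (i, b) := by
    intro i
    rcases huvfn i with ⟨_, hv⟩ | ⟨_, hv⟩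
    exacts [⟨true, by rw [hv]; rfl⟩, ⟨false, by rw [hv]; rfl⟩]
  have hufn_flat : ∀ i, ∃ b, ufn i = flat h (i, b) := by
    intro i
    rcases huvfn i with ⟨hu, _⟩ | ⟨hu, _⟩
    exacts [⟨false, by rw [hu]; rfl⟩, ⟨true, by rw [hu]; rfl⟩]
  have hflat_ne : ∀ (i j : Fin t) (b b' : Bool), i ≠ j → flat h (i,b) ≠ flat h (j,b') := by
    intro i j b b' hij hc
    exact hij (by simpa using congrArg Prod.fst (hm.2 hc))
  have hvfn_inj : ∀ i j, vfn i = vfn j → i = j := by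
    intro i j hij
    by_contra hne
    obtain ⟨b, hb⟩ := hvfn_flat i
    obtain ⟨b', hb'⟩ := hvfn_flat j
    exact hflat_ne i j b b' hne (by rw [← hb, ← hb', hij])
  have hufvne : ∀ i, ufn i ≠ vfn i := by
    intro i hc
    rcases huvfn i with ⟨hu, hv⟩ | ⟨hu, hv⟩ <;> rw [hu, hv] at hc
    · exact absurd (congrArg Prod.snd (hm.2 (a₁ := (i, false)) (a₂ := (i, true))
        (by simpa [flat] using hc))) (by simp)
    · exact absurd (congrArg Prod.snd (hm.2 (a₁ := (i, true)) (a₂ := (i, false))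
        (by simpa [flat] using hc))) (by simp)
  -- gamma fact
  have hgamma : ∀ i ∈ R, ∀ j ∈ R, i ≠ j → ¬ (vfn i ≠ vfn j ∧ s(vfn i, vfn j) ∈ Ed) := by
    rintro i hi j hj hij ⟨hne, hEd⟩
    obtain ⟨w, hwS, huw, huEd⟩ := getW1 (ufn i) (hufnS i) (le_trans one_le_two (hrichu i hi))
    obtain ⟨w', hw'S, hw'w, hu'w', hu'Ed⟩ := getW2 (ufn j) (hufnS j) (hrichu j hj) w
    have hstep1 : isM A t (Function.update h i (ufn i, w)) := by
      apply repl hm i (ufn i, w) ⟨huw, huEd⟩ huw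
      · rcases huvfn i with ⟨hu, _⟩ | ⟨hu, _⟩
        exacts [Or.inl hu, Or.inr (Or.inl hu)]
      · exact Or.inr (Or.inr (fun z hz =>
          hwS (by rw [show w = flat h z from hz]; exact hflatS z)))
    have hstep2 : isM A t (Function.update (Function.update h i (ufn i, w)) j (ufn j, w')) := by
      apply repl hstep1 j (ufn j, w') ⟨hu'w', hu'Ed⟩ hu'w'
      · rw [Function.update_of_ne (Ne.symm hij)]
        rcases huvfn j with ⟨hu, _⟩ | ⟨hu, _⟩
        exacts [Or.inl hu, Or.inr (Or.inl hu)]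
      · refine Or.inr (Or.inr ?_)
        rintro ⟨k, b⟩ hz
        simp only [flat_update] at hz
        by_cases hk : k = i
        · rw [if_pos hk] at hz
          cases b
          · simp only [Bool.false_eq_true, if_false] at hz
            exact hw'S (by rw [hz]; exact hufnS i)
          · simp only [if_true] at hz
            exact hw'w hz
        · rw [if_neg hk] at hz
          exact hw'S (by rw [hz]; exact hflatS (k, b))
    apply hmax
    refine ⟨_, app hstep2 (vfn i, vfn j) ⟨hne, hEd⟩ hne ?_ ?_⟩
    · rintro ⟨k, b⟩ hz
      simp only [flat_update] at hz
      by_cases hkj : k = j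
      · rw [if_pos hkj] at hz
        cases b
        · simp only [Bool.false_eq_true, if_false] at hz
          obtain ⟨b1, hb1⟩ := hvfn_flat i
          obtain ⟨b2, hb2⟩ := hufn_flat j
          exact hflat_ne i j b1 b2 hij (by rw [← hb1, ← hb2, hz])
        · simp only [if_true] at hz
          exact hw'S (by rw [← hz]; exact hvfnS i)
      · rw [if_neg hkj] at hz
        by_cases hki : k = i
        · rw [if_pos hki] at hz
          cases b
          · simp only [Bool.false_eq_true, if_false] at hz
            exact hufvne i hz.symm
          · simp only [if_true] at hz
            exact hwS (by rw [← hz]; exact hvfnS i)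
        · rw [if_neg hki] at hz
          obtain ⟨b1, hb1⟩ := hvfn_flat i
          exact hflat_ne i k b1 b (fun hc => hki hc.symm) (by rw [← hb1, hz])
    · rintro ⟨k, b⟩ hz
      simp only [flat_update] at hz
      by_cases hkj : k = j
      · rw [if_pos hkj] at hz
        cases b
        · simp only [Bool.false_eq_true, if_false] at hz
          exact hufvne j hz.symm
        · simp only [if_true] at hz
          exact hw'S (by rw [← hz]; exact hvfnS j)
      · rw [if_neg hkj] at hz
        by_cases hki : k = i
        · rw [if_pos hki] at hz
          cases b
          · simp only [Bool.false_eq_true, if_false] at hz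
            obtain ⟨b1, hb1⟩ := hvfn_flat j
            obtain ⟨b2, hb2⟩ := hufn_flat i
            exact hflat_ne j i b1 b2 (Ne.symm hij) (by rw [← hb1, ← hb2, hz])
          · simp only [if_true] at hz
            exact hwS (by rw [← hz]; exact hvfnS j)
        · rw [if_neg hki] at hz
          obtain ⟨b1, hb1⟩ := hvfn_flat j
          exact hflat_ne j k b1 b (fun hc => hkj hc.symm) (by rw [← hb1, hz])
  -- counting
  have hsum_S : ∀ (g : V → ℕ), ∑ v ∈ S, g v = ∑ i : Fin t, (g (h i).1 + g (h i).2) := by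
    intro g
    rw [hS, sum_image (fun x _ y _ hxy => hm.2 hxy), Fintype.sum_prod_type]
    refine sum_congr rfl fun i _ => ?_
    rw [Fintype.sum_bool]
    show g (h i).2 + g (h i).1 = _
    omega
  have hdW_W : ∀ v ∈ S, dW v ≤ W.card := by
    intro v hv
    refine card_le_other _ v W (fun e he => (mem_filter.1 he).2)
      (fun e he => hndcr _ (mem_filter.1 he).1) ?_
    intro e he u hu huv
    rw [hWdef, mem_compl]
    exact hEcr_other e (mem_filter.1 he).1 v (mem_filter.1 he).2 hv u hu huv
  have hEcr_bound : Ecr.card ≤ R.card * W.card + (univ.filter (fun i => ¬ rich i)).card * 2 := by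
    rw [hEcr_card, hsum_S]
    have hle : ∀ i : Fin t, dW (h i).1 + dW (h i).2 ≤ (if rich i then W.card else 2) := by
      intro i
      by_cases hri : rich i
      · rw [if_pos hri]
        have hiR : i ∈ R := by rw [hRdef, mem_filter]; exact ⟨mem_univ _, hri⟩
        have h1 := hdW_W (ufn i) (hufnS i)
        have h0 := hvfn_dW i hiR
        rcases huvfn i with ⟨hu, hv⟩ | ⟨hu, hv⟩ <;> rw [← hu, ← hv] <;> omega
      · rw [if_neg hri]
        simp only [hrichdef] at hri
        push_neg at hri
        omega
    calc ∑ i : Fin t, (dW (h i).1 + dW (h i).2) ≤ ∑ i : Fin t, (if rich i then W.card else 2) :=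
          sum_le_sum (fun i _ => hle i)
      _ = ∑ i ∈ univ.filter rich, (if rich i then W.card else 2)
          + ∑ i ∈ univ.filter (fun i => ¬ rich i), (if rich i then W.card else 2) :=
          (sum_filter_add_sum_filter_not univ rich _).symm
      _ = R.card * W.card + (univ.filter (fun i => ¬ rich i)).card * 2 := by
          rw [sum_congr rfl (fun i hi => if_pos (mem_filter.1 hi).2),
            sum_congr rfl (fun i hi => if_neg (mem_filter.1 hi).2),
            sum_const, sum_const, smul_eq_mul, smul_eq_mul, hRdef]
  have hhs : ∑ v ∈ S, din v = 2 * Ein.card := by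
    have h1 : ∑ v ∈ univ, din v = 2 * Ein.card := by
      simp only [hdindef, card_filter]
      rw [sum_comm]
      have h2 : ∀ e ∈ Ein, (∑ v ∈ univ, if v ∈ e then 1 else 0) = 2 := by
        intro e he
        rw [← card_filter]
        exact card_mem_filter (hndin e he)
      rw [sum_congr rfl h2, sum_const, smul_eq_mul, mul_comm]
    rw [← h1]
    symm
    apply (sum_subset (subset_univ S) ?_).symm
    intro v _ hvS
    simp only [hdindef]
    rw [card_eq_zero, filter_eq_empty_iff]
    intro e he hv
    exact hvS ((mem_filter.1 he).2 v hv)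
  have hdin_lt : ∀ v ∈ S, din v + 1 ≤ 2*t := by
    intro v hv
    have h1 : din v ≤ (S.erase v).card := by
      refine card_le_other _ v _ (fun e he => (mem_filter.1 he).2)
        (fun e he => hndin _ (mem_filter.1 he).1) ?_
      intro e he u hu huv
      exact mem_erase.2 ⟨huv, (mem_filter.1 (mem_filter.1 he).1).2 u hu⟩
    have h2 := card_erase_add_one hv
    omega
  set P : Finset V := R.image vfn with hPdef
  have hPcard : P.card = R.card := card_image_of_injOn (fun i _ j _ hij => hvfn_inj i j hij)
  have hPS : P ⊆ S := by
    intro x hx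
    rw [hPdef, mem_image] at hx
    obtain ⟨i, _, rfl⟩ := hx
    exact hvfnS i
  have hdin_rich : ∀ i ∈ R, din (vfn i) + R.card ≤ 2*t := by
    intro i hi
    have h1 : din (vfn i) ≤ (S \ P).card := by
      refine card_le_other _ (vfn i) _ (fun e he => (mem_filter.1 he).2)
        (fun e he => hndin _ (mem_filter.1 he).1) ?_
      intro e he u hu huv
      rw [mem_sdiff]
      refine ⟨(mem_filter.1 (mem_filter.1 he).1).2 u hu, ?_⟩
      intro huP
      rw [hPdef, mem_image] at huP
      obtain ⟨j, hj, rfl⟩ := huP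
      have hji : j ≠ i := fun hc => huv (by rw [hc])
      have heEd : e ∈ Ed := mem_of_mem_filter _ (mem_filter.1 he).1
      have heq : e = s(vfn i, vfn j) := sym2_eq (Ne.symm huv) (mem_filter.1 he).2 hu
      exact hgamma i hi j hj (Ne.symm hji) ⟨Ne.symm huv, by rw [← heq]; exact heEd⟩
    have h2 := card_sdiff_add_card_eq_card hPS
    omega
  have hdin_sum : 2 * Ein.card
      + (R.card * (R.card + 1) + (univ.filter (fun i => ¬ rich i)).card * 2) ≤ t * (4*t) := by
    have key1 : ∀ i : Fin t,
        (din (h i).1 + din (h i).2) + (if rich i then R.card + 1 else 2) ≤ 4*t := by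
      intro i
      by_cases hri : rich i
      · rw [if_pos hri]
        have hiR : i ∈ R := by rw [hRdef, mem_filter]; exact ⟨mem_univ _, hri⟩
        have h1 := hdin_lt (ufn i) (hufnS i)
        have h2 := hdin_rich i hiR
        rcases huvfn i with ⟨hu, hv⟩ | ⟨hu, hv⟩ <;> rw [← hu, ← hv] <;> omega
      · rw [if_neg hri]
        have h1 := hdin_lt (h i).1 (hin1 i)
        have h2 := hdin_lt (h i).2 (hin2 i)
        omega
    have hA1 : ∑ i : Fin t, ((din (h i).1 + din (h i).2) + (if rich i then R.card + 1 else 2))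
        ≤ ∑ _i : Fin t, 4*t := sum_le_sum (fun i _ => key1 i)
    rw [sum_add_distrib, sum_const, card_univ, Fintype.card_fin, smul_eq_mul] at hA1
    have e1 : ∑ i : Fin t, (din (h i).1 + din (h i).2) = 2 * Ein.card := by
      rw [← hsum_S din, hhs]
    have e2 : ∑ i : Fin t, (if rich i then R.card + 1 else 2)
        = R.card * (R.card + 1) + (univ.filter (fun i => ¬ rich i)).card * 2 := by
      rw [← sum_filter_add_sum_filter_not univ rich,
        sum_congr rfl (fun i hi => if_pos (mem_filter.1 hi).2),
        sum_congr rfl (fun i hi => if_neg (mem_filter.1 hi).2),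
        sum_const, sum_const, smul_eq_mul, smul_eq_mul, hRdef]
    rw [e1, e2] at hA1
    exact hA1
  have hr_le : R.card + (univ.filter (fun i => ¬ rich i)).card = t := by
    rw [hRdef]
    rw [card_filter_add_card_filter_not]
    simp
  -- final arithmetic
  set N := Fintype.card V
  set a := Ein.card
  set b := Ecr.card
  set r := R.card
  set r' := (univ.filter (fun i => ¬ rich i)).card
  set w := W.card
  have hrt : r ≤ t := by omega
  have hw' : 2*t + 1 ≤ w := by omega
  have hkey : (0:ℤ) ≤ ((t:ℤ) - r) * (2*(w:ℤ) - t - r - 3) := by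
    rcases eq_or_lt_of_le hrt with heq | hlt
    · rw [heq]; simp
    · apply mul_nonneg
      · have : (r:ℤ) < t := by exact_mod_cast hlt
        linarith
      · have h1 : (r:ℤ) + 1 ≤ t := by exact_mod_cast hlt
        have h2 : 2*(t:ℤ) + 1 ≤ w := by exact_mod_cast hw'
        linarith
  have hg : (2:ℤ) * Ed.card + t*t + t ≤ 2*t*N := by
    have c1 : (a:ℤ) + b = Ed.card := by exact_mod_cast hsplit
    have c2 : (b:ℤ) ≤ r * w + r' * 2 := by exact_mod_cast hEcr_bound
    have c3 : (2:ℤ) * a + (r * (r+1) + r' * 2) ≤ t * (4*t) := by exact_mod_cast hdin_sum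
    have c4 : (r:ℤ) + r' = t := by exact_mod_cast hr_le
    have c5 : (w:ℤ) + 2*t = N := by exact_mod_cast hW
    nlinarith [hkey, c1, c2, c3, c4, c5]
  exact_mod_cast hg

section Ext
/-- Any two embeddings of a type into a fintype are related by a permutation. -/
noncomputable def extPerm {A C : Type*} [Fintype C] [DecidableEq C] (e₁ e₂ : A ↪ C) :
    Equiv.Perm C := by
  classical
  exact Equiv.extendSubtype
    (((Equiv.ofInjective e₁ e₁.injective).symm.trans (Equiv.ofInjective e₂ e₂.injective)) :
      {x // x ∈ Set.range e₁} ≃ {x // x ∈ Set.range e₂})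

lemma extPerm_spec {A C : Type*} [Fintype C] [DecidableEq C] (e₁ e₂ : A ↪ C) (a : A) :
    extPerm e₁ e₂ (e₁ a) = e₂ a := by
  classical
  unfold extPerm
  rw [Equiv.extendSubtype_apply_of_mem _ _ (Set.mem_range_self a)]
  simp
end Ext

section Build
open SPM SPM2

lemma card_filter_lt {q k : ℕ} (hk : k ≤ q) :
    (univ.filter (fun i : Fin q => (i:ℕ) < k)).card = k := by
  have himg : univ.filter (fun i : Fin q => (i:ℕ) < k) = image (Fin.castLE hk) univ := by
    ext x
    simp only [mem_filter, mem_univ, true_and, mem_image]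
    constructor
    · intro hx; exact ⟨⟨x.val, hx⟩, Fin.ext rfl⟩
    · rintro ⟨y, rfl⟩; exact y.2
  rw [himg, card_image_of_injective _ (Fin.castLE_injective hk), card_univ, Fintype.card_fin]

lemma extendM {q k : ℕ} (hk : k ≤ q) (h : Fin k → Fin (2*q) × Fin (2*q))
    (hinj : Function.Injective (flat h)) :
    ∃ f : Equiv.Perm (Fin (2*q)), ∀ (i : Fin q) (b : Bool) (hi : (i:ℕ) < k),
      f (pos i b) = flat h (⟨i.val, hi⟩, b) := by
  have hinj1 : Function.Injective (fun z : Fin k × Bool => pos (Fin.castLE hk z.1) z.2) := by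
    rintro ⟨i, b⟩ ⟨j, c⟩ hz
    obtain ⟨h1, h2⟩ := pos_inj hz
    exact Prod.ext (Fin.castLE_injective hk h1) h2
  refine ⟨extPerm ⟨_, hinj1⟩ ⟨_, hinj⟩, ?_⟩
  intro i b hi
  have hspec := extPerm_spec ⟨_, hinj1⟩ ⟨_, hinj⟩ (⟨i.val, hi⟩, b)
  simp only [Function.Embedding.coeFn_mk] at hspec
  have hcast : Fin.castLE hk (⟨i.val, hi⟩ : Fin k) = i := Fin.ext rfl
  rw [hcast] at hspec
  exact hspec

set_option maxHeartbeats 1000000 in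
theorem lemB (n : ℕ) (hn : 0 < n) (σ : Sym2 (Fin (2*(2*n))) → ℤ)
    (hσ : ∀ e : Sym2 (Fin (2*(2*n))), ¬ e.IsDiag → σ e = 1 ∨ σ e = -1)
    (hT : ∑ e ∈ (⊤ : SimpleGraph (Fin (2*(2*n)))).edgeFinset, σ e < (n:ℤ)^2 + 11*n + 2) :
    ∃ f : Equiv.Perm (Fin (2*(2*n))), SPM.S σ f ≤ 2 := by
  classical
  by_contra hcon
  push_neg at hcon
  set Etot := (⊤ : SimpleGraph (Fin (2*(2*n)))).edgeFinset with hEtotdef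
  have hmemEtot : ∀ e, e ∈ Etot ↔ ¬ e.IsDiag := by
    intro e
    rw [hEtotdef, SimpleGraph.mem_edgeFinset, SimpleGraph.edgeSet_top]
    exact Iff.rfl
  set Eneg := Etot.filter (fun e => σ e = -1) with hEnegdef
  have hndneg : ∀ e ∈ Eneg, ¬ e.IsDiag := fun e he => (hmemEtot e).1 (mem_of_mem_filter e he)
  set A : Fin (2*(2*n)) → Fin (2*(2*n)) → Prop :=
    fun u v => u ≠ v ∧ s(u,v) ∈ Eneg with hAdef
  -- a matching of size n-1 in the negative graph gives a good perfect matching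
  have hnomatch : ¬ ∃ h : Fin (n-1) → Fin (2*(2*n)) × Fin (2*(2*n)), isM A (n-1) h := by
    rintro ⟨h, hm⟩
    have hk : n-1 ≤ 2*n := by omega
    obtain ⟨f, hf⟩ := extendM (q := 2*n) hk h hm.2
    have hneg : ∀ i : Fin (2*n), (i:ℕ) < n-1 → σ (ed f i) = -1 := by
      intro i hi
      have hed : ed f i = s((h ⟨i.val, hi⟩).1, (h ⟨i.val, hi⟩).2) := by
        show s(f (pos i false), f (pos i true)) = _
        rw [hf i false hi, hf i true hi]
        rfl
      rw [hed]
      exact (mem_filter.1 (hm.1 ⟨i.val, hi⟩).2).2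
    have hle1 : ∀ i : Fin (2*n), σ (ed f i) ≤ 1 := by
      intro i
      rcases hσ _ (ed_not_diag f i) with h1 | h1 <;> omega
    have hS2 : SPM.S σ f ≤ 2 := by
      have hsplit := sum_filter_add_sum_filter_not (univ : Finset (Fin (2*n)))
        (fun i => (i:ℕ) < n-1) (fun i => σ (ed f i))
      have hc1 : (univ.filter (fun i : Fin (2*n) => (i:ℕ) < n-1)).card = n-1 :=
        card_filter_lt (by omega)
      have hc2 : (univ.filter (fun i : Fin (2*n) => ¬ (i:ℕ) < n-1)).card = n+1 := by
        have hq := card_filter_add_card_filter_not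
          (s := (univ : Finset (Fin (2*n)))) (p := fun i => (i:ℕ) < n-1)
        rw [card_univ, Fintype.card_fin, hc1] at hq
        omega
      have hs1 : ∑ i ∈ univ.filter (fun i : Fin (2*n) => (i:ℕ) < n-1), σ (ed f i)
          = -((n:ℤ)-1) := by
        rw [sum_congr rfl (fun i hi => hneg i (mem_filter.1 hi).2), sum_const, hc1]
        have : ((n-1 : ℕ) : ℤ) = (n:ℤ) - 1 := by
          have h1 : (1:ℕ) ≤ n := hn
          push_cast [h1]
          ring
        simp [this]
      have hs2 : ∑ i ∈ univ.filter (fun i : Fin (2*n) => ¬(i:ℕ) < n-1), σ (ed f i)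
          ≤ ((n:ℤ)+1) := by
        calc ∑ i ∈ univ.filter (fun i : Fin (2*n) => ¬(i:ℕ) < n-1), σ (ed f i)
            ≤ (univ.filter (fun i : Fin (2*n) => ¬(i:ℕ) < n-1)).card • (1:ℤ) :=
              sum_le_card_nsmul _ _ _ (fun i _ => hle1 i)
          _ = ((n:ℤ)+1) := by rw [hc2]; push_cast; ring
      have hSeq : SPM.S σ f
          = ∑ i ∈ univ.filter (fun i : Fin (2*n) => (i:ℕ) < n-1), σ (ed f i)
          + ∑ i ∈ univ.filter (fun i : Fin (2*n) => ¬(i:ℕ) < n-1), σ (ed f i) := by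
        rw [SPM.S]
        exact hsplit.symm
      rw [hSeq, hs1]
      linarith
    exact absurd hS2 (not_le.2 (hcon f))
  rcases Nat.lt_or_ge n 2 with hn1 | hn2
  · -- n = 1 : matching of size 0 exists
    have hn1' : n = 1 := by omega
    subst hn1'
    exact hnomatch ⟨fun i => i.elim0, ⟨fun i => i.elim0, fun a b _ => a.1.elim0⟩⟩
  -- n ≥ 2
  set Pm : ℕ → Prop := fun k =>
    ∃ h : Fin k → Fin (2*(2*n)) × Fin (2*(2*n)), isM A k h with hPmdef
  set t := Nat.findGreatest Pm (n-2) with htdef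
  have hPt : Pm t :=
    Nat.findGreatest_spec (Nat.zero_le _)
      ⟨fun i => i.elim0, ⟨fun i => i.elim0, fun a b _ => a.1.elim0⟩⟩
  have htle : t ≤ n-2 := Nat.findGreatest_le _
  have hnot : ¬ Pm (t+1) := by
    rcases lt_or_eq_of_le htle with hlt | heq
    · have := Nat.findGreatest_is_greatest (P := Pm) (n := n-2) (k := t+1)
        (by omega) (by omega)
      exact this
    · intro hP
      apply hnomatch
      have h11 : t + 1 = n - 1 := by omega
      rw [h11] at hP
      exact hP
  obtain ⟨h, hm⟩ := hPt
  have hcardV : Fintype.card (Fin (2*(2*n))) = 2*(2*n) := Fintype.card_fin _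
  have hbound := lemL Eneg hndneg t h hm (fun hex => hnot hex) (by rw [hcardV]; omega)
  -- counting
  have hc : Etot.card = Eneg.card + (Etot.filter (fun e => ¬ σ e = -1)).card := by
    exact (card_filter_add_card_filter_not (p := fun e => σ e = -1)).symm
  have hTeq : ∑ e ∈ Etot, σ e
      = ((Etot.filter (fun e => ¬ σ e = -1)).card : ℤ) - (Eneg.card : ℤ) := by
    rw [← sum_filter_add_sum_filter_not Etot (fun e => σ e = -1)]
    have e1 : ∑ e ∈ Etot.filter (fun e => σ e = -1), σ e = -((Eneg.card : ℤ)) := by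
      rw [sum_congr rfl (fun e he => (mem_filter.1 he).2), sum_const, hEnegdef]
      simp
    have e2 : ∑ e ∈ Etot.filter (fun e => ¬ σ e = -1), σ e
        = ((Etot.filter (fun e => ¬ σ e = -1)).card : ℤ) := by
      have hone : ∀ e ∈ Etot.filter (fun e => ¬ σ e = -1), σ e = 1 := by
        intro e he
        rcases hσ e ((hmemEtot e).1 (mem_of_mem_filter e he)) with h1 | h1
        · exact h1
        · exact absurd h1 (mem_filter.1 he).2
      rw [sum_congr rfl hone, sum_const]
      simp
    rw [e1, e2]
    ring
  have hM2 : 2 * Etot.card = (2*(2*n)) * (2*(2*n) - 1) := by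
    rw [hEtotdef, SimpleGraph.card_edgeFinset_top_eq_card_choose_two, hcardV,
      Nat.choose_two_right]
    refine Nat.mul_div_cancel' ?_
    exact Dvd.dvd.mul_right (dvd_mul_right 2 (2*n)) _
  have hneg2 : 2 * Eneg.card + t*t + t ≤ 2*t*(2*(2*n)) := by
    rw [hcardV] at hbound
    exact hbound
  -- final arithmetic
  zify [show 1 ≤ 2*(2*n) by omega] at hM2
  have c1 : (Etot.card : ℤ) = Eneg.card + (Etot.filter (fun e => ¬ σ e = -1)).card := by
    exact_mod_cast hc
  have c3 : (2:ℤ) * Eneg.card + t*t + t ≤ 2*t*(2*(2*n)) := by exact_mod_cast hneg2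
  have c4 : (t:ℤ) ≤ (n:ℤ) - 2 := by
    have := htle
    zify [show 2 ≤ n by omega] at this
    exact this
  have hn2' : (2:ℤ) ≤ (n:ℤ) := by exact_mod_cast hn2
  have hkey : (0:ℤ) ≤ ((n:ℤ) - 2 - t) * (14*(n:ℤ) - 2*t + 2) := by
    apply mul_nonneg
    · linarith
    · have ht0 : (0:ℤ) ≤ t := Int.natCast_nonneg t
      linarith
  have hfinal : (n:ℤ)^2 + 11*n + 2 ≤ ∑ e ∈ Etot, σ e := by
    rw [hTeq]
    nlinarith [c1, hM2, c3, hkey, hn2']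
  linarith
end Build

section Final
open SPM SPM2

lemma S_swap_close {q : ℕ} (σ : Sym2 (Fin (2*q)) → ℤ)
    (hσ : ∀ e : Sym2 (Fin (2*q)), ¬ e.IsDiag → σ e = 1 ∨ σ e = -1)
    (f τ : Equiv.Perm (Fin (2*q))) (hτ : τ.IsSwap) :
    |SPM.S σ (f * τ) - SPM.S σ f| ≤ 4 := by
  obtain ⟨a, b, hab, rfl⟩ := hτ
  have ha2 := a.2
  have hb2 := b.2
  set ia : Fin q := ⟨a.val/2, by omega⟩ with hia
  set ib : Fin q := ⟨b.val/2, by omega⟩ with hib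
  set D : Finset (Fin q) := {ia, ib} with hD
  have hsame : ∀ i : Fin q, i ∉ D → ed (f * Equiv.swap a b) i = ed f i := by
    intro i hiD
    have hne : ∀ c : Bool, pos i c ≠ a ∧ pos i c ≠ b := by
      intro c
      constructor
      · intro hc
        apply hiD
        have hval : a.val = 2*i.val + c.toNat := (congrArg Fin.val hc).symm
        have hiia : i = ia := by
          apply Fin.ext
          rw [hia]
          cases c <;> simp [Bool.toNat] at hval ⊢ <;> omega
        rw [hD, hiia]
        exact mem_insert_self _ _
      · intro hc
        apply hiD
        have hval : b.val = 2*i.val + c.toNat := (congrArg Fin.val hc).symm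
        have hiib : i = ib := by
          apply Fin.ext
          rw [hib]
          cases c <;> simp [Bool.toNat] at hval ⊢ <;> omega
        rw [hD, hiib]
        exact mem_insert_of_mem (mem_singleton_self _)
    show s(f (Equiv.swap a b (pos i false)), f (Equiv.swap a b (pos i true)))
        = s(f (pos i false), f (pos i true))
    rw [Equiv.swap_apply_of_ne_of_ne (hne false).1 (hne false).2,
        Equiv.swap_apply_of_ne_of_ne (hne true).1 (hne true).2]
  have hdiff : SPM.S σ (f * Equiv.swap a b) - SPM.S σ f
      = ∑ i ∈ D, (σ (ed (f * Equiv.swap a b) i) - σ (ed f i)) := by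
    rw [SPM.S, SPM.S, ← sum_sub_distrib]
    exact (sum_subset (subset_univ D) (fun i _ hiD => by rw [hsame i hiD]; ring)).symm
  rw [hdiff]
  calc |∑ i ∈ D, (σ (ed (f * Equiv.swap a b) i) - σ (ed f i))|
      ≤ ∑ i ∈ D, |σ (ed (f * Equiv.swap a b) i) - σ (ed f i)| := abs_sum_le_sum_abs _ _
    _ ≤ ∑ _i ∈ D, (2:ℤ) := by
        refine sum_le_sum (fun i _ => ?_)
        rcases hσ _ (ed_not_diag (f * Equiv.swap a b) i) with h1 | h1 <;>
          rcases hσ _ (ed_not_diag f i) with h2 | h2 <;> rw [h1, h2] <;> norm_num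
    _ ≤ 4 := by
        rw [sum_const]
        have hcard : D.card ≤ 2 := by
          rw [hD]
          apply le_trans (card_insert_le _ _)
          simp
        have h2 : (D.card : ℤ) ≤ 2 := by exact_mod_cast hcard
        rw [nsmul_eq_mul]
        linarith

lemma exists_good {q : ℕ} (σ : Sym2 (Fin (2*q)) → ℤ)
    (hσ : ∀ e : Sym2 (Fin (2*q)), ¬ e.IsDiag → σ e = 1 ∨ σ e = -1)
    (f g : Equiv.Perm (Fin (2*q))) (hf : SPM.S σ f ≤ 2) (hg : -2 ≤ SPM.S σ g) :
    ∃ p : Equiv.Perm (Fin (2*q)), |SPM.S σ p| ≤ 2 := by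
  classical
  obtain ⟨l, hlprod, hlswap⟩ := (Equiv.Perm.truncSwapFactors (f⁻¹ * g)).out
  set a : ℕ → ℤ := fun j => SPM.S σ (f * (l.take j).prod) with ha
  have h0 : a 0 ≤ 2 := by
    have : a 0 = SPM.S σ f := by simp [ha]
    rw [this]; exact hf
  have hL : -2 ≤ a l.length := by
    have : a l.length = SPM.S σ g := by
      rw [ha]
      simp only [List.take_length, hlprod]
      rw [mul_inv_cancel_left]
    rw [this]; exact hg
  have hstep : ∀ j, j < l.length → |a (j+1) - a j| ≤ 4 := by
    intro j hj
    have htake : l.take (j+1) = l.take j ++ [l[j]] := by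
      rw [List.take_succ, List.getElem?_eq_getElem hj]
      rfl
    have heq : a (j+1) = SPM.S σ ((f * (l.take j).prod) * l[j]) := by
      rw [ha]
      simp only
      rw [htake, List.prod_append, List.prod_singleton, mul_assoc]
    rw [heq]
    exact S_swap_close σ hσ _ _ (hlswap _ (List.getElem_mem hj))
  obtain ⟨j, _, hja⟩ := SPM.ivt a l.length hstep h0 hL
  exact ⟨_, hja⟩

def pmSub (q : ℕ) (f : Equiv.Perm (Fin (2*q))) : (⊤ : SimpleGraph (Fin (2*q))).Subgraph where
  verts := Set.univ
  Adj u v := ∃ i : Fin q, (u = f (pos i false) ∧ v = f (pos i true)) ∨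
      (v = f (pos i false) ∧ u = f (pos i true))
  adj_sub := by
    rintro u v ⟨i, ⟨rfl, rfl⟩ | ⟨rfl, rfl⟩⟩ <;> simp only [SimpleGraph.top_adj] <;> intro hc
    · exact absurd (pos_inj (f.injective hc)).2 (by simp)
    · exact absurd (pos_inj (f.injective hc)).2 (by simp)
  edge_vert := fun _ => Set.mem_univ _
  symm := by
    constructor
    rintro u v ⟨i, hi | hi⟩
    exacts [⟨i, Or.inr hi⟩, ⟨i, Or.inl hi⟩]

lemma pmSub_isPM (q : ℕ) (f : Equiv.Perm (Fin (2*q))) : (pmSub q f).IsPerfectMatching := by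
  rw [SimpleGraph.Subgraph.isPerfectMatching_iff]
  intro v
  obtain ⟨i, b, hib⟩ := pos_cover (f.symm v)
  have hv : v = f (pos i b) := by rw [← hib]; simp
  refine ⟨f (pos i (!b)), ?_, ?_⟩
  · cases b
    · exact ⟨i, Or.inl ⟨hv, rfl⟩⟩
    · exact ⟨i, Or.inr ⟨rfl, hv⟩⟩
  · rintro y ⟨j, ⟨hj1, hj2⟩ | ⟨hj1, hj2⟩⟩
    · rw [hv] at hj1
      obtain ⟨hij, hb⟩ := pos_inj (f.injective hj1)
      subst hij; subst hb
      rw [hj2]; rfl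
    · rw [hv] at hj2
      obtain ⟨hij, hb⟩ := pos_inj (f.injective hj2)
      subst hij; subst hb
      rw [hj1]; rfl

lemma pmSub_edgeSet (q : ℕ) (f : Equiv.Perm (Fin (2*q))) :
    (pmSub q f).edgeSet = ↑(image (fun i => ed f i) univ) := by
  ext e
  induction e with
  | _ u v =>
    rw [SimpleGraph.Subgraph.mem_edgeSet]
    simp only [Finset.coe_image, Set.mem_image, Finset.mem_coe, Finset.mem_univ, coe_univ,
      Set.image_univ, Set.mem_range]
    constructor
    · rintro ⟨i, ⟨rfl, rfl⟩ | ⟨rfl, rfl⟩⟩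
      · exact ⟨i, rfl⟩
      · exact ⟨i, by rw [ed, Sym2.eq_swap]⟩
    · rintro ⟨i, hi⟩
      rw [ed, Sym2.eq_iff] at hi
      rcases hi with ⟨h1, h2⟩ | ⟨h1, h2⟩
      · exact ⟨i, Or.inl ⟨h1.symm, h2.symm⟩⟩
      · exact ⟨i, Or.inr ⟨h1.symm, h2.symm⟩⟩

lemma ed_inj {q : ℕ} (f : Equiv.Perm (Fin (2*q))) :
    ∀ i j : Fin q, ed f i = ed f j → i = j := by
  intro i j hij
  rw [ed, ed, Sym2.eq_iff] at hij
  rcases hij with ⟨h1, _⟩ | ⟨h1, h2⟩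
  · exact (pos_inj (f.injective h1)).1
  · exact absurd (pos_inj (f.injective h1)).2 (by simp)
end Final


section Assemble
open SPM SPM2

lemma pmSub_sum {q : ℕ} (f : Equiv.Perm (Fin (2*q))) (σ : Sym2 (Fin (2*q)) → ℤ) :
    sumE σ (pmSub q f).edgeSet = SPM.S σ f := by
  rw [sumE, pmSub_edgeSet]
  have hts : ((↑(image (fun i => ed f i) univ) : Set (Sym2 (Fin (2*q))))).toFinite.toFinset
      = image (fun i => ed f i) univ := by
    rw [Set.toFinite_toFinset, Finset.toFinset_coe]
  rw [hts, sum_image (fun i _ j _ hij => ed_inj f i j hij)]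
  rfl

theorem master (n : ℕ) (hn : 0 < n) (σ : Sym2 (Fin (2*(2*n))) → ℤ)
    (hσ : ∀ e : Sym2 (Fin (2*(2*n))), ¬ e.IsDiag → σ e = 1 ∨ σ e = -1)
    (habs : |∑ e ∈ (⊤ : SimpleGraph (Fin (2*(2*n)))).edgeFinset, σ e|
      < (n:ℤ)^2 + 11*n + 2) :
    ∃ M : (⊤ : SimpleGraph (Fin (2*(2*n)))).Subgraph,
      M.IsPerfectMatching ∧ |sumE σ M.edgeSet| ≤ 2 := by
  obtain ⟨f, hf⟩ := lemB n hn σ hσ (lt_of_le_of_lt (le_abs_self _) habs)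
  set σ' : Sym2 (Fin (2*(2*n))) → ℤ := fun e => -(σ e) with hσ'def
  have hσ'' : ∀ e : Sym2 (Fin (2*(2*n))), ¬ e.IsDiag → σ' e = 1 ∨ σ' e = -1 := by
    intro e he
    rcases hσ e he with h | h <;> simp [hσ'def, h]
  have hsum' : ∑ e ∈ (⊤ : SimpleGraph (Fin (2*(2*n)))).edgeFinset, σ' e
      = -∑ e ∈ (⊤ : SimpleGraph (Fin (2*(2*n)))).edgeFinset, σ e := by
    rw [hσ'def, sum_neg_distrib]
  have hT' : ∑ e ∈ (⊤ : SimpleGraph (Fin (2*(2*n)))).edgeFinset, σ' e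
      < (n:ℤ)^2 + 11*n + 2 := by
    rw [hsum']
    have h1 := neg_le_abs (∑ e ∈ (⊤ : SimpleGraph (Fin (2*(2*n)))).edgeFinset, σ e)
    linarith
  obtain ⟨g, hg⟩ := lemB n hn σ' hσ'' hT'
  have hg' : -2 ≤ SPM.S σ g := by
    have hSneg : SPM.S σ' g = - SPM.S σ g := by
      rw [SPM.S, SPM.S, hσ'def, ← sum_neg_distrib]
    rw [hSneg] at hg
    linarith
  obtain ⟨p, hp⟩ := exists_good σ hσ f g hf hg'
  exact ⟨pmSub (2*n) p, pmSub_isPM _ _, by rw [pmSub_sum]; exact hp⟩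
end Assemble


theorem stmt12 (n : ℕ) (hn : 0 < n) (σ : Sym2 (Fin (4*n)) → ℤ)
    (hσ : ∀ e ∈ (Kc (4*n)).edgeSet, σ e = 1 ∨ σ e = -1)
    (hsum : |sumE σ (Kc (4*n)).edgeSet| < (n : ℤ)^2 + 11*(n : ℤ) + 2) :
    ∃ M : (Kc (4*n)).Subgraph, M.IsPerfectMatching ∧
      |sumE σ M.edgeSet| ≤ 2 := by
  have key : ∀ (m : ℕ), m = 2*(2*n) → ∀ σ' : Sym2 (Fin m) → ℤ,
      (∀ e ∈ (Kc m).edgeSet, σ' e = 1 ∨ σ' e = -1) →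
      |sumE σ' (Kc m).edgeSet| < (n:ℤ)^2 + 11*(n:ℤ) + 2 →
      ∃ M : (Kc m).Subgraph, M.IsPerfectMatching ∧ |sumE σ' M.edgeSet| ≤ 2 := by
    rintro m rfl σ' hσ' habs'
    have hconv : sumE σ' (Kc (2*(2*n))).edgeSet
        = ∑ e ∈ (⊤ : SimpleGraph (Fin (2*(2*n)))).edgeFinset, σ' e := by
      rw [sumE]
      congr 1
      ext e
      simp [SimpleGraph.mem_edgeFinset, Set.Finite.mem_toFinset, Kc]
    have hσ'' : ∀ e : Sym2 (Fin (2*(2*n))), ¬ e.IsDiag → σ' e = 1 ∨ σ' e = -1 := by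
      intro e he
      apply hσ'
      rw [Kc, SimpleGraph.edgeSet_top]
      exact he
    rw [hconv] at habs'
    exact master n hn σ' hσ'' habs'
  exact key (4*n) (by ring) σ hσ hsum
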